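/- Fix r ∈ ℕ with r ≥ 1. Fix a : ℤ → ℂ with a(0) = 0, a(−m) = conj(a(m)) for all m, and ‖a‖_r = Σ_{m∈ℤ} |a(m)|·|m|^r < ∞, and fix a bounded b : ℤ → ℝ. Let γ ≥ 1, let (φ_m)_{m∈ℤ} be an orthonormal (Hilbert) basis of ℓ²(ℤ), and let λ : ℤ → ℝ be such that each (λ(m), φ_m) is an eigenpair of T_0 + b and |λ(m) − m − b(n)| ≤ γ for all m, n ∈ ℤ. Then for every q with 0 < q < 2r − 1 and every k ∈ ℤ, sup over t ∈ ℝ of Σ_{n∈ℤ} |n|^q · |Σ_{m∈ℤ} e^{−i t λ(m)} · conj(φ_m(k)) · φ_m(n)|² is finite. -/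

import Mathlib

noncomputable section

open scoped BigOperators ComplexConjugate

abbrev ℓ2 : Type := lp (fun _ : ℤ => ℂ) 2

/-- `(lam, φ)` is an eigenpair of the long-range operator `T₀ + b`:
for every `n`, `∑_m a (n - m) φ m + (n + b n) φ n = lam • φ n`. -/
def IsEigenpair (a : ℤ → ℂ) (b : ℤ → ℝ) (lam : ℝ) (φ : ℤ → ℂ) : Prop :=
  ∀ n : ℤ, (∑' m : ℤ, a (n - m) * φ m) + ((n : ℂ) + (b n : ℂ)) * φ n = (lam : ℂ) * φ n

namespace Stmt3Aux

def g (x : ℤ) : ℝ := 1 + |(x : ℝ)|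

lemma one_le_g (x : ℤ) : (1:ℝ) ≤ g x := by
  unfold g; have := abs_nonneg (x:ℝ); linarith

lemma g_pos (x : ℤ) : (0:ℝ) < g x := lt_of_lt_of_le one_pos (one_le_g x)

lemma g_neg (x : ℤ) : g (-x) = g x := by simp [g]

lemma g_add_le (x y : ℤ) : g (x + y) ≤ g x * g y := by
  have h1 := abs_add_le (x:ℝ) (y:ℝ)
  have h2 := abs_nonneg (x:ℝ)
  have h3 := abs_nonneg (y:ℝ)
  have : |((x+y:ℤ):ℝ)| ≤ |(x:ℝ)| + |(y:ℝ)| := by push_cast; exact h1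
  simp only [g]
  nlinarith [mul_nonneg h2 h3]

lemma summable_nat_g (p : ℝ) (hp : 1 < p) :
    Summable (fun n : ℕ => (1 + (n:ℝ)) ^ (-p)) := by
  have h : Summable (fun n : ℕ => ((n:ℝ)) ^ (-p)) :=
    Real.summable_nat_rpow.2 (by linarith)
  have := (summable_nat_add_iff (f := fun n : ℕ => ((n:ℝ)) ^ (-p)) 1).2 h
  refine this.congr fun n => ?_
  push_cast; ring_nf

lemma summable_g_rpow (p : ℝ) (hp : 1 < p) :
    Summable (fun n : ℤ => g n ^ (-p)) := by
  apply Summable.of_nat_of_neg (f := fun n : ℤ => g n ^ (-p)) <;>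
  · refine (summable_nat_g p hp).congr fun n => ?_
    simp [g]

lemma summable_g_sub (p : ℝ) (hp : 1 < p) (k : ℤ) :
    Summable (fun n : ℤ => g (n - k) ^ (-p)) := by
  have := summable_g_rpow p hp
  exact ((Equiv.subRight k).summable_iff (f := fun n : ℤ => g n ^ (-p))).2 this

lemma tsum_g_sub (p : ℝ) (k : ℤ) :
    ∑' n : ℤ, g (n - k) ^ (-p) = ∑' n : ℤ, g n ^ (-p) :=
  (Equiv.subRight k).tsum_eq (f := fun n : ℤ => g n ^ (-p))

lemma tsum_g_sub_left (p : ℝ) (k : ℤ) :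
    ∑' n : ℤ, g (k - n) ^ (-p) = ∑' n : ℤ, g n ^ (-p) :=
  (Equiv.subLeft k).tsum_eq (f := fun n : ℤ => g n ^ (-p))

lemma summable_g_sub_left (p : ℝ) (hp : 1 < p) (k : ℤ) :
    Summable (fun n : ℤ => g (k - n) ^ (-p)) := by
  have := summable_g_rpow p hp
  exact ((Equiv.subLeft k).summable_iff (f := fun n : ℤ => g n ^ (-p))).2 this


lemma g_inv_bound (s : ℝ) (hs : 0 ≤ s) (x y z : ℤ) (h : x = y + z) :
    g z ^ (-s) ≤ g y ^ s * g x ^ (-s) := by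
  have h1 : g x ^ s ≤ g y ^ s * g z ^ s := by
    rw [← Real.mul_rpow (g_pos y).le (g_pos z).le]
    exact Real.rpow_le_rpow (g_pos x).le (h ▸ g_add_le y z) hs
  calc g z ^ (-s) = g x ^ s * g x ^ (-s) * g z ^ (-s) := by
        rw [← Real.rpow_add (g_pos x)]; simp
    _ ≤ g y ^ s * g z ^ s * g x ^ (-s) * g z ^ (-s) := by
        have hx := Real.rpow_pos_of_pos (g_pos x) (-s)
        have hz := Real.rpow_pos_of_pos (g_pos z) (-s)
        calc g x ^ s * g x ^ (-s) * g z ^ (-s)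
            ≤ (g y ^ s * g z ^ s) * g x ^ (-s) * g z ^ (-s) := by
              gcongr
          _ = g y ^ s * g z ^ s * g x ^ (-s) * g z ^ (-s) := by ring
    _ = g y ^ s * g x ^ (-s) * (g z ^ s * g z ^ (-s)) := by ring
    _ = g y ^ s * g x ^ (-s) := by rw [← Real.rpow_add (g_pos z)]; simp

/-- summability of the weighted norms of `a` -/
lemma summable_a (r : ℕ) (a : ℤ → ℂ) (ha0 : a 0 = 0)
    (hsum : Summable fun m : ℤ => ‖a m‖ * (|m| : ℝ) ^ r)
    (d : ℕ) (hd : d ≤ r) :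
    Summable fun j : ℤ => ‖a j‖ * g j ^ (d:ℝ) := by
  have hle : ∀ j : ℤ, ‖a j‖ * g j ^ (d:ℝ) ≤ 2 ^ r * (‖a j‖ * (|j| : ℝ) ^ r) := by
    intro j
    rcases eq_or_ne j 0 with rfl | hj
    · simp [ha0]
    · have h1 : (1:ℝ) ≤ |(j:ℝ)| := by
        have h : (1:ℤ) ≤ |j| := Int.one_le_abs hj
        calc (1:ℝ) = ((1:ℤ):ℝ) := by norm_num
          _ ≤ ((|j|:ℤ):ℝ) := by exact_mod_cast h
          _ = |(j:ℝ)| := by push_cast; ring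
      have h2 : g j ^ (d:ℝ) ≤ (2 * |(j:ℝ)|) ^ (r:ℕ) := by
        calc g j ^ (d:ℝ) ≤ (2 * |(j:ℝ)|) ^ (d:ℝ) := by
              apply Real.rpow_le_rpow (g_pos j).le _ (by positivity)
              unfold g; linarith
          _ ≤ (2 * |(j:ℝ)|) ^ (r:ℝ) := by
              apply Real.rpow_le_rpow_of_exponent_le (by linarith) (by exact_mod_cast hd)
          _ = (2 * |(j:ℝ)|) ^ (r:ℕ) := by rw [Real.rpow_natCast]
      calc ‖a j‖ * g j ^ (d:ℝ) ≤ ‖a j‖ * (2 * |(j:ℝ)|) ^ (r:ℕ) := by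
            exact mul_le_mul_of_nonneg_left h2 (norm_nonneg _)
        _ = 2 ^ r * (‖a j‖ * (|j| : ℝ) ^ r) := by
            rw [mul_pow]; push_cast; ring
  exact Summable.of_nonneg_of_le (fun j => mul_nonneg (norm_nonneg _) (Real.rpow_nonneg (g_pos j).le _)) hle (hsum.mul_left _)


lemma decay (r : ℕ) (a : ℤ → ℂ) (ha0 : a 0 = 0)
    (hsum : Summable fun m : ℤ => ‖a m‖ * (|m| : ℝ) ^ r)
    (b : ℤ → ℝ) (γ : ℝ) (hγ : 1 ≤ γ)
    (φ : ℤ → ℓ2) (lam : ℤ → ℝ)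
    (hON : Orthonormal ℂ φ)
    (heig : ∀ m : ℤ, IsEigenpair a b (lam m) (φ m))
    (hloc : ∀ m n : ℤ, |lam m - m - b n| ≤ γ) :
    ∀ s : ℕ, s ≤ r → ∃ C : ℝ, 1 ≤ C ∧
      ∀ m n : ℤ, ‖(φ m : ∀ _ : ℤ, ℂ) n‖ ≤ C * g (n - m) ^ (-(s:ℝ)) := by
  intro s
  induction s with
  | zero =>
    intro _
    refine ⟨1, le_refl 1, fun m n => ?_⟩
    have h1 : ‖(φ m : ∀ _ : ℤ, ℂ) n‖ ≤ ‖φ m‖ :=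
      lp.norm_apply_le_norm (by norm_num) (φ m) n
    have h2 : ‖φ m‖ = 1 := hON.1 m
    simpa using h1.trans_eq h2
  | succ s ih =>
    intro hsr
    obtain ⟨C, hC1, hC⟩ := ih (le_trans (Nat.le_succ s) hsr)
    have hsle : s ≤ r := le_trans (Nat.le_succ s) hsr
    have hA : Summable fun j : ℤ => ‖a j‖ * g j ^ (s:ℝ) := summable_a r a ha0 hsum s hsle
    set A : ℝ := ∑' j : ℤ, ‖a j‖ * g j ^ (s:ℝ) with hAdef
    have hA0 : 0 ≤ A := tsum_nonneg fun j =>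
      mul_nonneg (norm_nonneg _) (Real.rpow_nonneg (g_pos j).le _)
    refine ⟨max (4*C*A + 1) ((1+2*γ) ^ ((s:ℝ)+1)), ?_, ?_⟩
    · refine le_max_of_le_right (Real.one_le_rpow (by linarith) (by positivity))
    intro m n
    have hgpos : (0:ℝ) < g (n - m) := g_pos _
    have hginv : (0:ℝ) < g (n - m) ^ (-((s:ℝ)+1)) := Real.rpow_pos_of_pos hgpos _
    have hφ1 : ‖(φ m : ∀ _ : ℤ, ℂ) n‖ ≤ 1 := by
      have h1 : ‖(φ m : ∀ _ : ℤ, ℂ) n‖ ≤ ‖φ m‖ :=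
        lp.norm_apply_le_norm (by norm_num) (φ m) n
      simpa [hON.1 m] using h1
    have hcast : (-((s+1:ℕ):ℝ)) = -((s:ℝ)+1) := by push_cast; ring
    rcases lt_or_ge (|((n-m:ℤ):ℝ)|) (2*γ) with hsmall | hbig
    · -- small case
      have hgle : g (n - m) ≤ 1 + 2*γ := by unfold g; linarith
      have h1 : (1:ℝ) = g (n-m) ^ ((s:ℝ)+1) * g (n-m) ^ (-((s:ℝ)+1)) := by
        have hz : (s:ℝ)+1 + (-((s:ℝ)+1)) = 0 := by ring
        rw [← Real.rpow_add hgpos, hz, Real.rpow_zero]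
      have h2 : g (n-m) ^ ((s:ℝ)+1) ≤ (1+2*γ) ^ ((s:ℝ)+1) :=
        Real.rpow_le_rpow hgpos.le hgle (by positivity)
      calc ‖(φ m : ∀ _ : ℤ, ℂ) n‖ ≤ 1 := hφ1
        _ = g (n-m) ^ ((s:ℝ)+1) * g (n-m) ^ (-((s:ℝ)+1)) := h1
        _ ≤ (1+2*γ) ^ ((s:ℝ)+1) * g (n-m) ^ (-((s:ℝ)+1)) := by gcongr
        _ ≤ max (4*C*A + 1) ((1+2*γ) ^ ((s:ℝ)+1)) * g (n-m) ^ (-((s:ℝ)+1)) := by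
            gcongr; exact le_max_right _ _
        _ = max (4*C*A + 1) ((1+2*γ) ^ ((s:ℝ)+1)) * g (n-m) ^ (-(((s+1:ℕ)):ℝ)) := by
            rw [hcast]
    · -- large case: use the eigenvalue equation
      have heq := heig m n
      have htsum : (∑' j : ℤ, a (n - j) * (φ m : ∀ _ : ℤ, ℂ) j)
          = (((lam m - n - b n : ℝ)):ℂ) * (φ m : ∀ _ : ℤ, ℂ) n := by
        push_cast
        linear_combination heq
      -- termwise bound
      have hterm : ∀ j : ℤ, ‖a (n - j) * (φ m : ∀ _ : ℤ, ℂ) j‖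
          ≤ (C * g (n-m) ^ (-(s:ℝ))) * (‖a (n - j)‖ * g (n - j) ^ (s:ℝ)) := by
        intro j
        rw [norm_mul]
        have h1 : ‖(φ m : ∀ _ : ℤ, ℂ) j‖ ≤ C * (g (n-j) ^ (s:ℝ) * g (n-m) ^ (-(s:ℝ))) := by
          refine (hC m j).trans ?_
          have := g_inv_bound (s:ℝ) (by positivity) (n-m) (n-j) (j-m) (by ring)
          exact mul_le_mul_of_nonneg_left this (by linarith)
        calc ‖a (n-j)‖ * ‖(φ m : ∀ _ : ℤ, ℂ) j‖
            ≤ ‖a (n-j)‖ * (C * (g (n-j) ^ (s:ℝ) * g (n-m) ^ (-(s:ℝ)))) :=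
              mul_le_mul_of_nonneg_left h1 (norm_nonneg _)
          _ = (C * g (n-m) ^ (-(s:ℝ))) * (‖a (n - j)‖ * g (n - j) ^ (s:ℝ)) := by ring
      -- summability of the dominating series
      have hAsub : Summable fun j : ℤ => ‖a (n - j)‖ * g (n - j) ^ (s:ℝ) :=
        ((Equiv.subLeft n).summable_iff
          (f := fun j : ℤ => ‖a j‖ * g j ^ (s:ℝ))).2 hA
      have hdom : Summable fun j : ℤ =>
          (C * g (n-m) ^ (-(s:ℝ))) * (‖a (n - j)‖ * g (n - j) ^ (s:ℝ)) :=
        hAsub.mul_left _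
      have hsumm : Summable fun j : ℤ => ‖a (n - j) * (φ m : ∀ _ : ℤ, ℂ) j‖ :=
        Summable.of_nonneg_of_le (fun j => norm_nonneg _) hterm hdom
      have htsA : ∑' j : ℤ, ‖a (n - j)‖ * g (n - j) ^ (s:ℝ) = A :=
        (Equiv.subLeft n).tsum_eq (f := fun j : ℤ => ‖a j‖ * g j ^ (s:ℝ))
      have hnormbd : ‖∑' j : ℤ, a (n - j) * (φ m : ∀ _ : ℤ, ℂ) j‖
          ≤ (C * g (n-m) ^ (-(s:ℝ))) * A := by
        calc ‖∑' j : ℤ, a (n - j) * (φ m : ∀ _ : ℤ, ℂ) j‖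
            ≤ ∑' j : ℤ, ‖a (n - j) * (φ m : ∀ _ : ℤ, ℂ) j‖ := norm_tsum_le_tsum_norm hsumm
          _ ≤ ∑' j : ℤ, (C * g (n-m) ^ (-(s:ℝ))) * (‖a (n - j)‖ * g (n - j) ^ (s:ℝ)) :=
              Summable.tsum_le_tsum hterm hsumm hdom
          _ = (C * g (n-m) ^ (-(s:ℝ))) * ∑' j : ℤ, (‖a (n - j)‖ * g (n - j) ^ (s:ℝ)) :=
              tsum_mul_left
          _ = (C * g (n-m) ^ (-(s:ℝ))) * A := by rw [htsA]
      -- lower bound on the eigenvalue factor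
      have hd : (2:ℝ) ≤ |((n-m:ℤ):ℝ)| := le_trans (by linarith) hbig
      have hlow : g (n-m) / 4 ≤ |lam m - n - b n| := by
        have h1 : |lam m - m - b n| ≤ γ := hloc m n
        have h2 : |((n-m:ℤ):ℝ)| - |lam m - m - b n| ≤ |lam m - n - b n| := by
          have h3 : |lam m - ↑n - b n| = |((n-m:ℤ):ℝ) - (lam m - ↑m - b n)| := by
            rw [abs_sub_comm ((n-m:ℤ):ℝ)]
            push_cast
            congr 1
            ring
          have := abs_sub_abs_le_abs_sub ((n-m:ℤ):ℝ) (lam m - ↑m - b n)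
          linarith
        have hg : g (n-m) = 1 + |((n-m:ℤ):ℝ)| := rfl
        rw [hg]
        linarith
      have hnz : (0:ℝ) < g (n-m) / 4 := by positivity
      -- combine
      have hkey : (g (n-m) / 4) * ‖(φ m : ∀ _ : ℤ, ℂ) n‖ ≤ (C * g (n-m) ^ (-(s:ℝ))) * A := by
        calc (g (n-m) / 4) * ‖(φ m : ∀ _ : ℤ, ℂ) n‖
            ≤ |lam m - n - b n| * ‖(φ m : ∀ _ : ℤ, ℂ) n‖ :=
              mul_le_mul_of_nonneg_right hlow (norm_nonneg _)
          _ = ‖(((lam m - n - b n : ℝ)):ℂ) * (φ m : ∀ _ : ℤ, ℂ) n‖ := by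
              rw [norm_mul, Complex.norm_real]; rfl
          _ = ‖∑' j : ℤ, a (n - j) * (φ m : ∀ _ : ℤ, ℂ) j‖ := by rw [htsum]
          _ ≤ (C * g (n-m) ^ (-(s:ℝ))) * A := hnormbd
      have hginv1 : g (n-m) ^ (-((s:ℝ)+1)) = g (n-m) ^ (-(s:ℝ)) * (g (n-m))⁻¹ := by
        rw [← Real.rpow_neg_one (g (n-m)), ← Real.rpow_add hgpos]; ring_nf
      have hfin : ‖(φ m : ∀ _ : ℤ, ℂ) n‖ ≤ (4*C*A) * g (n-m) ^ (-((s:ℝ)+1)) := by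
        rw [hginv1]
        rw [div_mul_eq_mul_div, div_le_iff₀ (by norm_num : (0:ℝ) < 4)] at hkey
        -- hkey : g (n-m) * ‖φ m n‖ ≤ (C * g^{-s}) * A * 4
        rw [← le_div_iff₀' hgpos] at hkey
        calc ‖(φ m : ∀ _ : ℤ, ℂ) n‖ ≤ C * g (n-m) ^ (-(s:ℝ)) * A * 4 / g (n-m) := hkey
          _ = 4*C*A * (g (n-m) ^ (-(s:ℝ)) * (g (n-m))⁻¹) := by ring
      refine hfin.trans ?_
      rw [hcast]
      have : (4*C*A) ≤ max (4*C*A + 1) ((1+2*γ) ^ ((s:ℝ)+1)) :=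
        le_max_of_le_left (by linarith)
      gcongr

lemma prod_le (x y : ℤ) (α β : ℝ) (hα : 0 ≤ α) (hβ : 0 ≤ β) :
    g x ^ (-α) * g y ^ (-β) ≤ g x ^ (-(α+β)) + g y ^ (-(α+β)) := by
  rcases le_total (g x) (g y) with h | h
  · have h1 : g y ^ (-β) ≤ g x ^ (-β) :=
      Real.rpow_le_rpow_of_nonpos (g_pos x) h (by linarith)
    have h2 : g x ^ (-α) * g y ^ (-β) ≤ g x ^ (-α) * g x ^ (-β) :=
      mul_le_mul_of_nonneg_left h1 (Real.rpow_nonneg (g_pos x).le _)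
    have h3 : g x ^ (-α) * g x ^ (-β) = g x ^ (-(α+β)) := by
      rw [← Real.rpow_add (g_pos x)]; ring_nf
    have h4 : (0:ℝ) ≤ g y ^ (-(α+β)) := Real.rpow_nonneg (g_pos y).le _
    linarith
  · have h1 : g x ^ (-α) ≤ g y ^ (-α) :=
      Real.rpow_le_rpow_of_nonpos (g_pos y) h (by linarith)
    have h2 : g x ^ (-α) * g y ^ (-β) ≤ g y ^ (-α) * g y ^ (-β) :=
      mul_le_mul_of_nonneg_right h1 (Real.rpow_nonneg (g_pos y).le _)
    have h3 : g y ^ (-α) * g y ^ (-β) = g y ^ (-(α+β)) := by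
      rw [← Real.rpow_add (g_pos y)]; ring_nf
    have h4 : (0:ℝ) ≤ g x ^ (-(α+β)) := Real.rpow_nonneg (g_pos x).le _
    linarith

lemma conv (ρ c : ℝ) (hc0 : 0 < c) (hcρ : c ≤ ρ) (h1 : 1 < 2*ρ - c) (k n : ℤ) :
    Summable (fun m : ℤ => g (m - k) ^ (-ρ) * g (n - m) ^ (-ρ)) ∧
    ∑' m : ℤ, g (m - k) ^ (-ρ) * g (n - m) ^ (-ρ)
      ≤ (2:ℝ) ^ c * (2 * ∑' j : ℤ, g j ^ (-(2*ρ - c))) * g (n - k) ^ (-c) := by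
  have hρ1 : 1 < 2*ρ := by linarith
  have hρ0 : 0 ≤ ρ := by linarith
  -- summability
  have hS1 : Summable (fun m : ℤ => g (m - k) ^ (-(2*ρ)) + g (n - m) ^ (-(2*ρ))) :=
    (summable_g_sub _ hρ1 k).add (summable_g_sub_left _ hρ1 n)
  have hsummable : Summable (fun m : ℤ => g (m - k) ^ (-ρ) * g (n - m) ^ (-ρ)) := by
    apply Summable.of_nonneg_of_le (fun m => by
      exact mul_nonneg (Real.rpow_nonneg (g_pos _).le _) (Real.rpow_nonneg (g_pos _).le _))
      (fun m => ?_) hS1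
    have := prod_le (m-k) (n-m) ρ ρ hρ0 hρ0
    have hρρ : ρ + ρ = 2*ρ := by ring
    rwa [hρρ] at this
  refine ⟨hsummable, ?_⟩
  -- per-term bound
  have hterm : ∀ m : ℤ, g (m - k) ^ (-ρ) * g (n - m) ^ (-ρ)
      ≤ (2:ℝ) ^ c * g (n - k) ^ (-c) *
        (g (m - k) ^ (-(2*ρ - c)) + g (n - m) ^ (-(2*ρ - c))) := by
    intro m
    have htri : g (n - k) ≤ g (m - k) + g (n - m) := by
      unfold g
      have h := abs_add_le ((m-k:ℤ):ℝ) ((n-m:ℤ):ℝ)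
      have e : ((m-k:ℤ):ℝ) + ((n-m:ℤ):ℝ) = ((n-k:ℤ):ℝ) := by push_cast; ring
      rw [e] at h
      linarith
    have key : ∀ x y : ℤ, g (n - k) / 2 ≤ g y →
        g x ^ (-ρ) * g y ^ (-ρ) ≤ (2:ℝ) ^ c * g (n - k) ^ (-c) *
          (g x ^ (-(ρ + (ρ - c))) + g y ^ (-(ρ + (ρ - c)))) := by
      intro x y hy
      have hy2 : (0:ℝ) < g (n - k) / 2 := by have := g_pos (n-k); linarith
      have hb1 : g y ^ (-c) ≤ (g (n - k) / 2) ^ (-c) :=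
        Real.rpow_le_rpow_of_nonpos hy2 hy (by linarith)
      have hb2 : (g (n - k) / 2) ^ (-c) = (2:ℝ) ^ c * g (n - k) ^ (-c) := by
        rw [Real.div_rpow (g_pos (n-k)).le (by norm_num : (0:ℝ) ≤ 2)]
        rw [Real.rpow_neg (g_pos (n-k)).le, Real.rpow_neg (by norm_num : (0:ℝ) ≤ 2)]
        field_simp
      have hsplity : g y ^ (-ρ) = g y ^ (-c) * g y ^ (-(ρ - c)) := by
        rw [← Real.rpow_add (g_pos y)]; ring_nf
      have hby : g y ^ (-ρ) ≤ (2:ℝ) ^ c * g (n - k) ^ (-c) * g y ^ (-(ρ - c)) := by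
        rw [hsplity, ← hb2]
        exact mul_le_mul_of_nonneg_right hb1 (Real.rpow_nonneg (g_pos y).le _)
      have hprod := prod_le x y ρ (ρ - c) hρ0 (by linarith)
      have hxpos : (0:ℝ) ≤ g x ^ (-ρ) := Real.rpow_nonneg (g_pos x).le _
      calc g x ^ (-ρ) * g y ^ (-ρ)
          ≤ g x ^ (-ρ) * ((2:ℝ) ^ c * g (n - k) ^ (-c) * g y ^ (-(ρ - c))) :=
            mul_le_mul_of_nonneg_left hby hxpos
        _ = (2:ℝ) ^ c * g (n - k) ^ (-c) * (g x ^ (-ρ) * g y ^ (-(ρ - c))) := by ring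
        _ ≤ (2:ℝ) ^ c * g (n - k) ^ (-c) * (g x ^ (-(ρ + (ρ - c))) + g y ^ (-(ρ + (ρ - c)))) := by
            apply mul_le_mul_of_nonneg_left hprod
            have := Real.rpow_nonneg (g_pos (n-k)).le (-c)
            positivity
    have he : ρ + (ρ - c) = 2*ρ - c := by ring
    rcases le_total (g (m - k)) (g (n - m)) with h | h
    · have hy : g (n - k) / 2 ≤ g (n - m) := by linarith
      have := key (m - k) (n - m) hy
      rwa [he] at this
    · have hy : g (n - k) / 2 ≤ g (m - k) := by linarith
      have hx := key (n - m) (m - k) hy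
      rw [he] at hx
      calc g (m - k) ^ (-ρ) * g (n - m) ^ (-ρ)
          = g (n - m) ^ (-ρ) * g (m - k) ^ (-ρ) := by ring
        _ ≤ (2:ℝ) ^ c * g (n - k) ^ (-c) *
            (g (n - m) ^ (-(2*ρ - c)) + g (m - k) ^ (-(2*ρ - c))) := hx
        _ = (2:ℝ) ^ c * g (n - k) ^ (-c) *
            (g (m - k) ^ (-(2*ρ - c)) + g (n - m) ^ (-(2*ρ - c))) := by ring
  -- sum the bound
  have hSd : Summable (fun m : ℤ => g (m - k) ^ (-(2*ρ - c)) + g (n - m) ^ (-(2*ρ - c))) :=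
    (summable_g_sub _ h1 k).add (summable_g_sub_left _ h1 n)
  have hdom : Summable (fun m : ℤ => (2:ℝ) ^ c * g (n - k) ^ (-c) *
      (g (m - k) ^ (-(2*ρ - c)) + g (n - m) ^ (-(2*ρ - c)))) := hSd.mul_left _
  calc ∑' m : ℤ, g (m - k) ^ (-ρ) * g (n - m) ^ (-ρ)
      ≤ ∑' m : ℤ, (2:ℝ) ^ c * g (n - k) ^ (-c) *
        (g (m - k) ^ (-(2*ρ - c)) + g (n - m) ^ (-(2*ρ - c))) :=
        Summable.tsum_le_tsum hterm hsummable hdom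
    _ = (2:ℝ) ^ c * g (n - k) ^ (-c) *
        ∑' m : ℤ, (g (m - k) ^ (-(2*ρ - c)) + g (n - m) ^ (-(2*ρ - c))) := tsum_mul_left
    _ = (2:ℝ) ^ c * g (n - k) ^ (-c) *
        ((∑' m : ℤ, g (m - k) ^ (-(2*ρ - c))) + ∑' m : ℤ, g (n - m) ^ (-(2*ρ - c))) := by
        rw [Summable.tsum_add (summable_g_sub _ h1 k) (summable_g_sub_left _ h1 n)]
    _ = (2:ℝ) ^ c * g (n - k) ^ (-c) * (2 * ∑' j : ℤ, g j ^ (-(2*ρ - c))) := by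
        rw [tsum_g_sub, tsum_g_sub_left]; ring
    _ = (2:ℝ) ^ c * (2 * ∑' j : ℤ, g j ^ (-(2*ρ - c))) * g (n - k) ^ (-c) := by ring

end Stmt3Aux

open Stmt3Aux

theorem stmt_3
    (r : ℕ) (hr : 1 ≤ r)
    (a : ℤ → ℂ) (ha0 : a 0 = 0) (hsym : ∀ m : ℤ, a (-m) = conj (a m))
    (hsum : Summable fun m : ℤ => ‖a m‖ * (|m| : ℝ) ^ r)
    (b : ℤ → ℝ) (hb : BddAbove (Set.range fun n : ℤ => |b n|))
    (γ : ℝ) (hγ : 1 ≤ γ)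
    (φ : ℤ → ℓ2) (lam : ℤ → ℝ)
    (hON : Orthonormal ℂ φ)
    (hcomplete : (Submodule.span ℂ (Set.range φ)).topologicalClosure = ⊤)
    (heig : ∀ m : ℤ, IsEigenpair a b (lam m) (φ m))
    (hloc : ∀ m n : ℤ, |lam m - m - b n| ≤ γ) :
    ∀ q : ℝ, 0 < q → q < 2 * r - 1 → ∀ k : ℤ,
      ∃ C : ℝ, ∀ t : ℝ,
        Summable (fun n : ℤ => (|n| : ℝ) ^ q *
          ‖∑' m : ℤ, Complex.exp (-(Complex.I * t * lam m)) *
            conj ((φ m : ∀ _ : ℤ, ℂ) k) * (φ m : ∀ _ : ℤ, ℂ) n‖ ^ 2) ∧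
        (∑' n : ℤ, (|n| : ℝ) ^ q *
          ‖∑' m : ℤ, Complex.exp (-(Complex.I * t * lam m)) *
            conj ((φ m : ∀ _ : ℤ, ℂ) k) * (φ m : ∀ _ : ℤ, ℂ) n‖ ^ 2) ≤ C := by
  intro q hq0 hq k
  -- choose the intermediate exponent c
  set c : ℝ := ((q+1)/2 + r)/2 with hcdef
  have hr1 : (1:ℝ) ≤ (r:ℝ) := by exact_mod_cast hr
  have hq2r : (q+1)/2 < (r:ℝ) := by linarith
  have hc1 : (q+1)/2 < c := by rw [hcdef]; linarith
  have hc2 : c < (r:ℝ) := by rw [hcdef]; linarith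
  have hc0 : 0 < c := by linarith
  have h2rc : 1 < 2*(r:ℝ) - c := by linarith
  have h2cq : 1 < 2*c - q := by linarith
  -- the decay estimate for eigenfunctions
  obtain ⟨Cd, hCd1, hCd⟩ := decay r a ha0 hsum b γ hγ φ lam hON heig hloc r (le_refl r)
  set Z : ℝ := ∑' j : ℤ, g j ^ (-(2*(r:ℝ) - c)) with hZdef
  set K : ℝ := (2:ℝ) ^ c * (2 * Z) with hKdef
  have hZ0 : 0 ≤ Z := tsum_nonneg fun j => Real.rpow_nonneg (g_pos j).le _
  have hK0 : 0 ≤ K := by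
    rw [hKdef]
    have : (0:ℝ) ≤ (2:ℝ) ^ c := Real.rpow_nonneg (by norm_num) _
    positivity
  set M : ℝ := (g k) ^ q * (Cd^2 * K)^2 with hMdef
  have hM0 : 0 ≤ M := by
    rw [hMdef]
    have := Real.rpow_nonneg (g_pos k).le q
    positivity
  refine ⟨M * ∑' n : ℤ, g (n - k) ^ (-(2*c - q)), ?_⟩
  intro t
  -- uniform pointwise bound on the propagator kernel
  have hker : ∀ n : ℤ,
      ‖∑' m : ℤ, Complex.exp (-(Complex.I * t * lam m)) *
        conj ((φ m : ∀ _ : ℤ, ℂ) k) * (φ m : ∀ _ : ℤ, ℂ) n‖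
      ≤ Cd^2 * K * g (n - k) ^ (-c) := by
    intro n
    obtain ⟨hconvS, hconvB⟩ := conv (r:ℝ) c hc0 hc2.le h2rc k n
    have hexp : ∀ m : ℤ, ‖Complex.exp (-(Complex.I * t * lam m))‖ = 1 := by
      intro m
      have he : -(Complex.I * t * lam m) = ((-(t * lam m) : ℝ) : ℂ) * Complex.I := by
        push_cast; ring
      rw [he, Complex.norm_exp_ofReal_mul_I]
    have hterm : ∀ m : ℤ, ‖Complex.exp (-(Complex.I * t * lam m)) *
        conj ((φ m : ∀ _ : ℤ, ℂ) k) * (φ m : ∀ _ : ℤ, ℂ) n‖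
        ≤ Cd^2 * (g (m - k) ^ (-(r:ℝ)) * g (n - m) ^ (-(r:ℝ))) := by
      intro m
      rw [norm_mul, norm_mul, hexp m, one_mul, RCLike.norm_conj]
      calc ‖(φ m : ∀ _ : ℤ, ℂ) k‖ * ‖(φ m : ∀ _ : ℤ, ℂ) n‖
          ≤ (Cd * g (k - m) ^ (-(r:ℝ))) * (Cd * g (n - m) ^ (-(r:ℝ))) := by
            apply mul_le_mul (hCd m k) (hCd m n) (norm_nonneg _)
            have := Real.rpow_nonneg (g_pos (k-m)).le (-(r:ℝ))
            positivity
        _ = Cd^2 * (g (k - m) ^ (-(r:ℝ)) * g (n - m) ^ (-(r:ℝ))) := by ring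
        _ = Cd^2 * (g (m - k) ^ (-(r:ℝ)) * g (n - m) ^ (-(r:ℝ))) := by
            rw [show k - m = -(m - k) by ring, g_neg]
    have hdom : Summable (fun m : ℤ =>
        Cd^2 * (g (m - k) ^ (-(r:ℝ)) * g (n - m) ^ (-(r:ℝ)))) := hconvS.mul_left _
    have hsummn : Summable (fun m : ℤ => ‖Complex.exp (-(Complex.I * t * lam m)) *
        conj ((φ m : ∀ _ : ℤ, ℂ) k) * (φ m : ∀ _ : ℤ, ℂ) n‖) :=
      Summable.of_nonneg_of_le (fun m => norm_nonneg _) hterm hdom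
    calc ‖∑' m : ℤ, Complex.exp (-(Complex.I * t * lam m)) *
          conj ((φ m : ∀ _ : ℤ, ℂ) k) * (φ m : ∀ _ : ℤ, ℂ) n‖
        ≤ ∑' m : ℤ, ‖Complex.exp (-(Complex.I * t * lam m)) *
          conj ((φ m : ∀ _ : ℤ, ℂ) k) * (φ m : ∀ _ : ℤ, ℂ) n‖ := norm_tsum_le_tsum_norm hsummn
      _ ≤ ∑' m : ℤ, Cd^2 * (g (m - k) ^ (-(r:ℝ)) * g (n - m) ^ (-(r:ℝ))) :=
          Summable.tsum_le_tsum hterm hsummn hdom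
      _ = Cd^2 * ∑' m : ℤ, g (m - k) ^ (-(r:ℝ)) * g (n - m) ^ (-(r:ℝ)) := tsum_mul_left
      _ ≤ Cd^2 * (K * g (n - k) ^ (-c)) := by
          apply mul_le_mul_of_nonneg_left _ (by positivity)
          rw [hKdef, hZdef]
          exact hconvB
      _ = Cd^2 * K * g (n - k) ^ (-c) := by ring
  -- per-site bound for the moment sum
  have hsite : ∀ n : ℤ, (|n| : ℝ) ^ q *
      ‖∑' m : ℤ, Complex.exp (-(Complex.I * t * lam m)) *
        conj ((φ m : ∀ _ : ℤ, ℂ) k) * (φ m : ∀ _ : ℤ, ℂ) n‖ ^ 2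
      ≤ M * g (n - k) ^ (-(2*c - q)) := by
    intro n
    have habs : |(n:ℝ)| ≤ g k * g (n - k) := by
      unfold g
      have h := abs_add_le ((k:ℤ):ℝ) ((n-k:ℤ):ℝ)
      have e : ((k:ℤ):ℝ) + ((n-k:ℤ):ℝ) = (n:ℝ) := by push_cast; ring
      rw [e] at h
      have h1 := abs_nonneg ((k:ℤ):ℝ)
      have h2 := abs_nonneg ((n-k:ℤ):ℝ)
      nlinarith [mul_nonneg h1 h2]
    have h1 : (|n| : ℝ) ^ q ≤ (g k) ^ q * g (n - k) ^ q := by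
      rw [← Real.mul_rpow (g_pos k).le (g_pos (n-k)).le]
      exact Real.rpow_le_rpow (by positivity) habs hq0.le
    have h2 : ‖∑' m : ℤ, Complex.exp (-(Complex.I * t * lam m)) *
        conj ((φ m : ∀ _ : ℤ, ℂ) k) * (φ m : ∀ _ : ℤ, ℂ) n‖ ^ 2
        ≤ (Cd^2 * K)^2 * g (n - k) ^ (-(2*c)) := by
      have h3 := pow_le_pow_left₀ (norm_nonneg _) (hker n) 2
      refine h3.trans (le_of_eq ?_)
      rw [mul_pow]
      congr 1
      rw [← Real.rpow_natCast (g (n-k) ^ (-c)) 2, ← Real.rpow_mul (g_pos (n-k)).le]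
      congr 1
      push_cast
      ring
    have hnn1 : (0:ℝ) ≤ (g k) ^ q * g (n - k) ^ q := by
      have := Real.rpow_nonneg (g_pos k).le q
      have := Real.rpow_nonneg (g_pos (n-k)).le q
      positivity
    calc (|n| : ℝ) ^ q *
        ‖∑' m : ℤ, Complex.exp (-(Complex.I * t * lam m)) *
          conj ((φ m : ∀ _ : ℤ, ℂ) k) * (φ m : ∀ _ : ℤ, ℂ) n‖ ^ 2
        ≤ ((g k) ^ q * g (n - k) ^ q) * ((Cd^2 * K)^2 * g (n - k) ^ (-(2*c))) :=
          mul_le_mul h1 h2 (by positivity) hnn1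
      _ = M * (g (n - k) ^ q * g (n - k) ^ (-(2*c))) := by rw [hMdef]; ring
      _ = M * g (n - k) ^ (-(2*c - q)) := by
          rw [← Real.rpow_add (g_pos (n-k))]
          congr 1
          ring
  -- conclude: summability and the uniform bound
  have hdom2 : Summable (fun n : ℤ => M * g (n - k) ^ (-(2*c - q))) :=
    (summable_g_sub _ h2cq k).mul_left _
  have hnn : ∀ n : ℤ, (0:ℝ) ≤ (|n| : ℝ) ^ q *
      ‖∑' m : ℤ, Complex.exp (-(Complex.I * t * lam m)) *
        conj ((φ m : ∀ _ : ℤ, ℂ) k) * (φ m : ∀ _ : ℤ, ℂ) n‖ ^ 2 := by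
    intro n
    have hb0 : (0:ℝ) ≤ (|n| : ℝ) := by exact_mod_cast abs_nonneg n
    have := Real.rpow_nonneg hb0 q
    positivity
  have hS : Summable (fun n : ℤ => (|n| : ℝ) ^ q *
      ‖∑' m : ℤ, Complex.exp (-(Complex.I * t * lam m)) *
        conj ((φ m : ∀ _ : ℤ, ℂ) k) * (φ m : ∀ _ : ℤ, ℂ) n‖ ^ 2) :=
    Summable.of_nonneg_of_le hnn hsite hdom2
  refine ⟨hS, ?_⟩
  calc (∑' n : ℤ, (|n| : ℝ) ^ q *
      ‖∑' m : ℤ, Complex.exp (-(Complex.I * t * lam m)) *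
        conj ((φ m : ∀ _ : ℤ, ℂ) k) * (φ m : ∀ _ : ℤ, ℂ) n‖ ^ 2)
      ≤ ∑' n : ℤ, M * g (n - k) ^ (-(2*c - q)) := Summable.tsum_le_tsum hsite hS hdom2
    _ = M * ∑' n : ℤ, g (n - k) ^ (-(2*c - q)) := tsum_mul_left
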